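/- Let E be a nonzero real Banach space and f : E × E* → ]−∞,∞] proper convex with f(x,x*) ≥ ⟨x,x*⟩ for all (x,x*). Then the coincidence set coinc[f] := {(x,x*) : f(x,x*) = ⟨x,x*⟩} is a monotone subset of E × E*: for all (a,a*), (b,b*) ∈ coinc[f], ⟨a − b, a* − b*⟩ ≥ 0. -/

import Mathlib

theorem stmt11 {E : Type*} [NormedAddCommGroup E] [NormedSpace ℝ E] [CompleteSpace E]
    [Nontrivial E]
    (f : E × StrongDual ℝ E → EReal)
    (hfbot : ∀ b, f b ≠ ⊥) (hproper : ∃ b, f b ≠ ⊤)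
    (hconv : ∀ b c : E × StrongDual ℝ E, ∀ a a' : ℝ, 0 ≤ a → 0 ≤ a' → a + a' = 1 →
      f (a • b + a' • c) ≤ (a : EReal) * f b + (a' : EReal) * f c)
    (hge : ∀ b : E × StrongDual ℝ E, ((b.2 b.1 : ℝ) : EReal) ≤ f b)
    (a b : E × StrongDual ℝ E)
    (ha : f a = ((a.2 a.1 : ℝ) : EReal)) (hb : f b = ((b.2 b.1 : ℝ) : EReal)) :
    0 ≤ (a.2 - b.2) (a.1 - b.1) := by
  set m : E × StrongDual ℝ E := (1/2 : ℝ) • a + (1/2 : ℝ) • b with hm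
  have h1 := hconv a b (1/2) (1/2) (by norm_num) (by norm_num) (by norm_num)
  rw [ha, hb] at h1
  have h2 := (hge m).trans h1
  have h3 : ((m.2 m.1 : ℝ) : EReal) ≤ (((1/2 : ℝ) * (a.2 a.1) + (1/2 : ℝ) * (b.2 b.1) : ℝ) : EReal) := by
    refine h2.trans_eq ?_
    rw [EReal.coe_add, EReal.coe_mul, EReal.coe_mul]
  rw [EReal.coe_le_coe_iff] at h3
  have hm1 : m.1 = (1/2 : ℝ) • a.1 + (1/2 : ℝ) • b.1 := rfl
  have hm2 : m.2 = (1/2 : ℝ) • a.2 + (1/2 : ℝ) • b.2 := rfl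
  have h4 : m.2 m.1 = (1/2 : ℝ) * ((1/2 : ℝ) * a.2 a.1 + (1/2 : ℝ) * a.2 b.1)
      + (1/2 : ℝ) * ((1/2 : ℝ) * b.2 a.1 + (1/2 : ℝ) * b.2 b.1) := by
    rw [hm2, hm1]
    simp [map_add, map_smul, smul_eq_mul]
    ring
  have h5 : (a.2 - b.2) (a.1 - b.1) = a.2 a.1 - a.2 b.1 - b.2 a.1 + b.2 b.1 := by
    simp [map_sub]
    ring
  rw [h5]
  rw [h4] at h3
  linarith
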